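/- arXiv:1710.08132 — 6 statements merged into one kernel-verified Lean document; each statement's English description precedes it below -/
import Mathlib

section
/- Suppose τ_0, τ_1 are real constants and ϱ, ℓ_1 : (0,∞) → ℝ are functions with ℓ_1 twice differentiable and nowhere vanishing, satisfying for all λ > 0 (with ' = d/dλ): 4 ϱ(λ) ℓ_1(λ)² = −( (ℓ_1²)''(λ) − 3 ℓ_1'(λ)² + τ_0 ) and ℓ_1(λ)² − (λ ℓ_1(λ))'' + 3 ℓ_1'(λ) − 4 ϱ(λ) λ ℓ_1(λ) = τ_1. Then ℓ_1 satisfies the Painlevé III equation ℓ_1''(λ) = ℓ_1'(λ)²/ℓ_1(λ) − ℓ_1'(λ)/λ − ℓ_1(λ)²/λ − τ_0/ℓ_1(λ) + τ_1/λ for all λ > 0. -/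
/-- The first (k = 1) member of the Painlevé III hierarchy reduces to
the Painlevé III equation for `ℓ₁`. -/
theorem painleve_III_hierarchy_k_one (τ0 τ1 : ℝ) (ϱ ℓ1 : ℝ → ℝ)
    (hdiff : ∀ l ∈ Set.Ioi (0 : ℝ), DifferentiableAt ℝ ℓ1 l)
    (hdiff2 : ∀ l ∈ Set.Ioi (0 : ℝ), DifferentiableAt ℝ (deriv ℓ1) l)
    (hne : ∀ l ∈ Set.Ioi (0 : ℝ), ℓ1 l ≠ 0)
    (h0 : ∀ l ∈ Set.Ioi (0 : ℝ),
      4 * ϱ l * ℓ1 l ^ 2 =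
        -(deriv (deriv (fun t => ℓ1 t ^ 2)) l - 3 * (deriv ℓ1 l) ^ 2 + τ0))
    (h1 : ∀ l ∈ Set.Ioi (0 : ℝ),
      ℓ1 l ^ 2 - deriv (deriv (fun t => t * ℓ1 t)) l + 3 * deriv ℓ1 l
        - 4 * ϱ l * l * ℓ1 l = τ1) :
    ∀ l ∈ Set.Ioi (0 : ℝ),
      deriv (deriv ℓ1) l =
        (deriv ℓ1 l) ^ 2 / ℓ1 l - deriv ℓ1 l / l - ℓ1 l ^ 2 / l
          - τ0 / ℓ1 l + τ1 / l := by
  intro l hl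
  have hlmem : Set.Ioi (0 : ℝ) ∈ nhds l := (isOpen_Ioi).mem_nhds hl
  have hlpos : (0 : ℝ) < l := hl
  have hl0 : ℓ1 l ≠ 0 := hne l hl
  -- first derivative of square
  have hsq1 : deriv (fun t => ℓ1 t ^ 2) =ᶠ[nhds l] fun t => 2 * ℓ1 t * deriv ℓ1 t := by
    filter_upwards [hlmem] with t ht
    have h := ((hdiff t ht).hasDerivAt.pow 2)
    simpa [pow_one, mul_comm, mul_assoc, mul_left_comm] using (show deriv (fun t => ℓ1 t ^ 2) t = _ from h.deriv)
  have hsq2 : deriv (deriv (fun t => ℓ1 t ^ 2)) l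
      = 2 * (deriv ℓ1 l) ^ 2 + 2 * ℓ1 l * deriv (deriv ℓ1) l := by
    rw [hsq1.deriv_eq]
    have h := (((hdiff l hl).const_mul 2).hasDerivAt.mul (hdiff2 l hl).hasDerivAt)
    have := h.deriv
    simp only [deriv_const_mul_field] at this
    rw [show (fun t => 2 * ℓ1 t * deriv ℓ1 t) = ((fun y => 2 * ℓ1 y) * deriv ℓ1) from rfl, this]; ring
  -- first derivative of t * ℓ1 t
  have hm1 : deriv (fun t => t * ℓ1 t) =ᶠ[nhds l] fun t => ℓ1 t + t * deriv ℓ1 t := by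
    filter_upwards [hlmem] with t ht
    have h := (hasDerivAt_id t).mul (hdiff t ht).hasDerivAt
    simpa [mul_comm] using (show deriv (fun t => t * ℓ1 t) t = _ from h.deriv)
  have hm2 : deriv (deriv (fun t => t * ℓ1 t)) l
      = 2 * deriv ℓ1 l + l * deriv (deriv ℓ1) l := by
    rw [hm1.deriv_eq]
    have h := ((hdiff l hl).hasDerivAt.add ((hasDerivAt_id l).mul (hdiff2 l hl).hasDerivAt))
    have := h.deriv
    simp only [id_eq, one_mul] at this
    rw [show (fun t => ℓ1 t + t * deriv ℓ1 t) = (ℓ1 + id * deriv ℓ1) from rfl, this]; ring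
  have H0 := h0 l hl
  have H1 := h1 l hl
  rw [hsq2] at H0
  rw [hm2] at H1
  have key : 4 * ϱ l * l * ℓ1 l = (4 * ϱ l * ℓ1 l ^ 2) * l / ℓ1 l := by
    field_simp
  rw [H0] at key
  rw [key] at H1
  field_simp at H1 ⊢
  linear_combination H1
end

section
/- Let α be a real number. Suppose a, b_2 : (0,∞) → ℝ are functions with a differentiable and b_2 twice differentiable and nowhere vanishing, satisfying for all λ > 0 (with ' = d/dλ): −b_2(λ) b_2''(λ) + b_2'(λ)²/2 + 4 a'(λ) b_2(λ)² = 2 and −(λ/2) b_2''(λ) + b_2'(λ)/2 + 4 a'(λ) λ b_2(λ) + 2 b_2(λ)² = −2α. Then b_2 satisfies the Painlevé III equation b_2''(λ) − b_2'(λ)²/b_2(λ) + (1/λ)( b_2'(λ) + 4 b_2(λ)² + 4α ) + 4/b_2(λ) = 0 for all λ > 0. -/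
/-- With `b₁(λ) = λ/2` and `b₃ ≡ 0`, the `j = 4` and `j = 3` equations of
the coupled Painlevé III system with `k = 1` imply that `b₂` solves a Painlevé III equation. -/
theorem coupled_painleve_III_k_one_reduces_to_painleve_III (α : ℝ) (a b2 : ℝ → ℝ)
    (ha : ∀ l ∈ Set.Ioi (0 : ℝ), DifferentiableAt ℝ a l)
    (hb : ∀ l ∈ Set.Ioi (0 : ℝ), DifferentiableAt ℝ b2 l)
    (hb2 : ∀ l ∈ Set.Ioi (0 : ℝ), DifferentiableAt ℝ (deriv b2) l)
    (hne : ∀ l ∈ Set.Ioi (0 : ℝ), b2 l ≠ 0)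
    (h4 : ∀ l ∈ Set.Ioi (0 : ℝ),
      -(b2 l) * deriv (deriv b2) l + (deriv b2 l) ^ 2 / 2 + 4 * deriv a l * b2 l ^ 2 = 2)
    (h3 : ∀ l ∈ Set.Ioi (0 : ℝ),
      -(l / 2) * deriv (deriv b2) l + deriv b2 l / 2 + 4 * deriv a l * l * b2 l
        + 2 * b2 l ^ 2 = -2 * α) :
    ∀ l ∈ Set.Ioi (0 : ℝ),
      deriv (deriv b2) l - (deriv b2 l) ^ 2 / b2 l
        + (1 / l) * (deriv b2 l + 4 * b2 l ^ 2 + 4 * α) + 4 / b2 l = 0 := by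
  intro l hl
  have hb0 : b2 l ≠ 0 := hne l hl
  have hl0 : l ≠ 0 := ne_of_gt hl
  have e4 := h4 l hl
  have e3 := h3 l hl
  field_simp
  linear_combination ((-2 * l) * e4 + (2 * b2 l) * e3)
end

section
/- Let k ≥ 1 be an integer and α a real number. Suppose a, b_1, …, b_{k+1} : (0,∞) → ℝ are functions, a differentiable and each b_j twice differentiable, with b_1(λ) = λ/2 for all λ > 0 and the convention b_{k+2} ≡ 0, satisfying for every integer j with k+2 ≤ j ≤ 2k+2 and all λ > 0: ∑_{m=j−k−1}^{k+1}( −b_{j−m}(λ) b_m''(λ) + b_{j−m}'(λ) b_m'(λ)/2 + 4 a'(λ) b_{j−m}(λ) b_m(λ) + 2 b_{j−m}(λ) b_{m+1}(λ) ) = Λ_j, where Λ_{2k+2} = 2k², Λ_{k+2} = (−1)^k·2αk, and Λ_j = 0 otherwise. Define ϱ(λ) := −2a'(λ) and ℓ_j(λ) := 4^j b_{j+1}(λ) for j = 0, …, k, with ℓ_{k+1} ≡ 0. Then ℓ_0(λ) = λ/2 and (ϱ, ℓ_1, …, ℓ_k) satisfy the k-th member of the Painlevé III hierarchy: 4 ϱ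 ℓ_k² = −( (ℓ_k²)'' − 3 (ℓ_k')² + τ_0 ) and, for each 1 ≤ p ≤ k, ∑_{q=0}^{p}( ℓ_{k−p+q+1} ℓ_{k−q} − (ℓ_{k−p+q} ℓ_{k−q})'' + 3 ℓ_{k−p+q}' ℓ_{k−q}' − 4 ϱ ℓ_{k−p+q} ℓ_{k−q} ) = τ_p, where τ_0 = 4^{2k+1} k², τ_k = −(−4)^{k+1} α k, and τ_p = 0 for 0 < p < k. -/
open Set

lemma second_deriv_mul_aux (f g : ℝ → ℝ) (s : Set ℝ) (hs : IsOpen s)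
    (hf : ∀ x ∈ s, DifferentiableAt ℝ f x ∧ DifferentiableAt ℝ (deriv f) x)
    (hg : ∀ x ∈ s, DifferentiableAt ℝ g x ∧ DifferentiableAt ℝ (deriv g) x)
    (l : ℝ) (hl : l ∈ s) :
    deriv (deriv (fun t => f t * g t)) l =
      deriv (deriv f) l * g l + 2 * (deriv f l * deriv g l) + f l * deriv (deriv g) l := by
  have h1 : (fun t => deriv f t * g t + f t * deriv g t)
      =ᶠ[nhds l] deriv (fun t => f t * g t) := by
    filter_upwards [hs.mem_nhds hl] with x hx
    rw [deriv_fun_mul (hf x hx).1 (hg x hx).1]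
  rw [← h1.deriv_eq]
  rw [deriv_fun_add (f := fun t => deriv f t * g t) (g := fun t => f t * deriv g t)
      ((hf l hl).2.mul (hg l hl).1) ((hf l hl).1.mul (hg l hl).2),
    deriv_fun_mul (hf l hl).2 (hg l hl).1, deriv_fun_mul (hf l hl).1 (hg l hl).2]
  ring

/-- The coupled Painlevé III system with `s = 0` and `b₁(λ) = λ/2` yields,
via `ϱ = −2a'` and `ℓ_j = 4^j b_{j+1}`, the `k`-th member of the Painlevé III hierarchy. -/
theorem coupled_painleve_III_at_s_zero_gives_hierarchy (k : ℕ) (hk : 1 ≤ k) (α : ℝ)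
    (a : ℝ → ℝ) (b : ℕ → ℝ → ℝ)
    (ha : ∀ l ∈ Ioi (0 : ℝ), DifferentiableAt ℝ a l)
    (hb : ∀ j, 1 ≤ j → j ≤ k + 1 → ∀ l ∈ Ioi (0 : ℝ),
      DifferentiableAt ℝ (b j) l ∧ DifferentiableAt ℝ (deriv (b j)) l)
    (hb1 : ∀ l ∈ Ioi (0 : ℝ), b 1 l = l / 2)
    (hbk2 : b (k + 2) = (fun _ => 0))
    (hsys : ∀ j, k + 2 ≤ j → j ≤ 2 * k + 2 → ∀ l ∈ Ioi (0 : ℝ),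
      ∑ m ∈ Finset.Icc (j - k - 1) (k + 1),
        (-(b (j - m) l) * deriv (deriv (b m)) l
          + deriv (b (j - m)) l * deriv (b m) l / 2
          + 4 * deriv a l * b (j - m) l * b m l
          + 2 * b (j - m) l * b (m + 1) l)
        = (if j = 2 * k + 2 then 2 * (k : ℝ) ^ 2
           else if j = k + 2 then (-1 : ℝ) ^ k * 2 * α * k
           else 0))
    (ϱ : ℝ → ℝ) (hϱ : ϱ = fun l => -2 * deriv a l)
    (ℓ : ℕ → ℝ → ℝ) (hℓ : ∀ j, ℓ j = fun l => 4 ^ j * b (j + 1) l) :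
    -- ℓ₀(λ) = λ/2
    (∀ l ∈ Ioi (0 : ℝ), ℓ 0 l = l / 2) ∧
    -- the p = 0 equation, in the form multiplied through by 4 ℓ_k²
    (∀ l ∈ Ioi (0 : ℝ),
      4 * ϱ l * (ℓ k l) ^ 2 =
        -(deriv (deriv (fun t => (ℓ k t) ^ 2)) l - 3 * (deriv (ℓ k) l) ^ 2
          + 4 ^ (2 * k + 1) * (k : ℝ) ^ 2)) ∧
    -- the equations for 1 ≤ p ≤ k
    (∀ p, 1 ≤ p → p ≤ k → ∀ l ∈ Ioi (0 : ℝ),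
      ∑ q ∈ Finset.range (p + 1),
        (ℓ (k - p + q + 1) l * ℓ (k - q) l
          - deriv (deriv (fun t => ℓ (k - p + q) t * ℓ (k - q) t)) l
          + 3 * deriv (ℓ (k - p + q)) l * deriv (ℓ (k - q)) l
          - 4 * ϱ l * ℓ (k - p + q) l * ℓ (k - q) l)
        = (if p = k then -(-4 : ℝ) ^ (k + 1) * α * k else 0)) := by
  have hℓval : ∀ j l, ℓ j l = 4 ^ j * b (j + 1) l := by
    intro j l; rw [hℓ]
  have hℓd : ∀ j l, deriv (ℓ j) l = 4 ^ j * deriv (b (j + 1)) l := by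
    intro j l
    rw [hℓ j]
    exact deriv_const_mul_field _
  have hℓdfun : ∀ j, deriv (ℓ j) = fun l => 4 ^ j * deriv (b (j + 1)) l :=
    fun j => funext (hℓd j)
  have hℓdd : ∀ j l, deriv (deriv (ℓ j)) l = 4 ^ j * deriv (deriv (b (j + 1))) l := by
    intro j l
    rw [hℓdfun j]
    exact deriv_const_mul_field _
  have hℓdiff : ∀ j, j ≤ k → ∀ l ∈ Ioi (0 : ℝ),
      DifferentiableAt ℝ (ℓ j) l ∧ DifferentiableAt ℝ (deriv (ℓ j)) l := by
    intro j hj l hl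
    obtain ⟨h1, h2⟩ := hb (j + 1) (by omega) (by omega) l hl
    constructor
    · rw [hℓ j]; exact h1.const_mul _
    · rw [hℓdfun j]; exact h2.const_mul _
  refine ⟨?_, ?_, ?_⟩
  · intro l hl
    rw [hℓval, hb1 l hl]
    norm_num
  · -- the p = 0 equation
    intro l hl
    have hs := hsys (2 * k + 2) (by omega) (by omega) l hl
    rw [show 2 * k + 2 - k - 1 = k + 1 from by omega, Finset.Icc_self,
      Finset.sum_singleton, show 2 * k + 2 - (k + 1) = k + 1 from by omega,
      if_pos rfl, show k + 1 + 1 = k + 2 from by omega, hbk2] at hs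
    simp only [mul_zero, add_zero] at hs
    have hsq : (fun t => ℓ k t ^ 2) = fun t => ℓ k t * ℓ k t := by
      funext t; ring
    rw [hsq, second_deriv_mul_aux (ℓ k) (ℓ k) (Ioi 0) isOpen_Ioi
      (hℓdiff k le_rfl) (hℓdiff k le_rfl) l hl]
    simp only [hℓval, hℓd, hℓdd, hϱ]
    rw [show (4 : ℝ) ^ (2 * k + 1) = 4 * (4 ^ k * 4 ^ k) from by
      rw [show 2 * k + 1 = k + k + 1 from by omega, pow_succ, pow_add]; ring]
    linear_combination (-2 * (4 : ℝ) ^ k * 4 ^ k) * hs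
  · -- the equations for 1 ≤ p ≤ k
    intro p hp1 hpk l hl
    have hs := hsys (2 * k + 2 - p) (by omega) (by omega) l hl
    rw [show 2 * k + 2 - p - k - 1 = k + 1 - p from by omega,
      ← Finset.Ico_add_one_right_eq_Icc, Finset.sum_Ico_eq_sum_range,
      show k + 1 + 1 - (k + 1 - p) = p + 1 from by omega,
      if_neg (by omega)] at hs
    have hD : ∑ q ∈ Finset.range (p + 1),
        (deriv (deriv (b (k - p + q + 1))) l * b (k - q + 1) l
          - b (k - p + q + 1) l * deriv (deriv (b (k - q + 1))) l) = 0 := by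
      have h2 := Finset.sum_range_reflect
        (fun q => deriv (deriv (b (k - p + q + 1))) l * b (k - q + 1) l
          - b (k - p + q + 1) l * deriv (deriv (b (k - q + 1))) l) (p + 1)
      simp only [Nat.add_sub_cancel] at h2
      have h3 : ∀ q ∈ Finset.range (p + 1),
          (deriv (deriv (b (k - p + (p - q) + 1))) l * b (k - (p - q) + 1) l
            - b (k - p + (p - q) + 1) l * deriv (deriv (b (k - (p - q) + 1))) l)
          = -(deriv (deriv (b (k - p + q + 1))) l * b (k - q + 1) l
            - b (k - p + q + 1) l * deriv (deriv (b (k - q + 1))) l) := by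
        intro q hq
        rw [Finset.mem_range] at hq
        rw [show k - p + (p - q) = k - q from by omega,
          show k - (p - q) = k - p + q from by omega]
        ring
      rw [Finset.sum_congr rfl h3, Finset.sum_neg_distrib] at h2
      linarith
    have key : ∀ q ∈ Finset.range (p + 1),
        (ℓ (k - p + q + 1) l * ℓ (k - q) l
          - deriv (deriv (fun t => ℓ (k - p + q) t * ℓ (k - q) t)) l
          + 3 * deriv (ℓ (k - p + q)) l * deriv (ℓ (k - q)) l
          - 4 * ϱ l * ℓ (k - p + q) l * ℓ (k - q) l)
        = 2 * 4 ^ (2 * k - p)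
            * (-(b (2 * k + 2 - p - (k + 1 - p + q)) l)
                  * deriv (deriv (b (k + 1 - p + q))) l
              + deriv (b (2 * k + 2 - p - (k + 1 - p + q))) l
                  * deriv (b (k + 1 - p + q)) l / 2
              + 4 * deriv a l * b (2 * k + 2 - p - (k + 1 - p + q)) l * b (k + 1 - p + q) l
              + 2 * b (2 * k + 2 - p - (k + 1 - p + q)) l * b (k + 1 - p + q + 1) l)
          + 4 ^ (2 * k - p)
            * (deriv (deriv (b (k - p + q + 1))) l * b (k - q + 1) l
              - b (k - p + q + 1) l * deriv (deriv (b (k - q + 1))) l) := by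
      intro q hq
      rw [Finset.mem_range] at hq
      rw [second_deriv_mul_aux (ℓ (k - p + q)) (ℓ (k - q)) (Ioi 0) isOpen_Ioi
        (hℓdiff _ (by omega)) (hℓdiff _ (by omega)) l hl]
      rw [show 2 * k + 2 - p - (k + 1 - p + q) = k - q + 1 from by omega,
        show k + 1 - p + q = k - p + q + 1 from by omega]
      simp only [hℓval, hℓd, hℓdd, hϱ]
      have h1 : (4 : ℝ) ^ (k - p + q) * 4 ^ (k - q) = 4 ^ (2 * k - p) := by
        rw [← pow_add]; congr 1; omega
      rw [← h1]
      ring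
    rw [Finset.sum_congr rfl key, Finset.sum_add_distrib, ← Finset.mul_sum,
      ← Finset.mul_sum, hs, hD, mul_zero, add_zero]
    by_cases hpk2 : p = k
    · subst hpk2
      rw [if_pos (by omega), if_pos rfl, show 2 * p - p = p from by omega,
        show (-4 : ℝ) = (-1) * 4 from by norm_num, mul_pow, pow_succ, pow_succ]
      ring
    · rw [if_neg (by omega), if_neg hpk2, mul_zero]
end

section
/- Set η₀ = ∑_{j=1}^{k} (−1)^{k+j} c_j and η₁ = ∑_{j=1}^{k} (−1)^{k+j} j c_j. Then, as z → −1 with z ∉ (−∞, −1], g(z) − (1 − λ^k η₀ / s^{k+1/2}) (z+1)^{1/2} + (λ^k η₁ / s^{k+1/2}) (z+1)^{3/2} = O(|z+1|^{5/2}); that is, there exist δ, C > 0 such that the left-hand side is bounded by C|z+1|^{5/2} whenever 0 < |z+1| < δ and z ∉ (−∞, −1]. -/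
open Complex Set

/-- The generalized binomial coefficient `C(1/2, n) = (1/2)(1/2−1)⋯(1/2−n+1)/n!`. -/
noncomputable def halfChoose (n : ℕ) : ℝ :=
  (∏ i ∈ Finset.range n, (1 / 2 - (i : ℝ))) / (Nat.factorial n)

/-- The g-function `g(z) = (z+1)^{1/2} (1 + (−1)^{k+1} (λ^k/s^{k+1/2}) ∑_{j=1}^k c_j z^{−j})`,
with the principal branch of `(z+1)^{1/2}`. -/
noncomputable def gFun (k : ℕ) (lam s : ℝ) (c : ℕ → ℝ) (z : ℂ) : ℂ :=
  (z + 1) ^ ((1 : ℂ) / 2) *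
    (1 + ((-1 : ℂ)) ^ (k + 1) * ((lam ^ k : ℝ) : ℂ) / ((s ^ ((k : ℝ) + 1 / 2) : ℝ) : ℂ) *
      ∑ j ∈ Finset.Icc 1 k, ((c j : ℝ) : ℂ) * z ^ (-(j : ℤ)))

lemma aux_bound (j : ℕ) : ∃ C : ℝ, 0 ≤ C ∧ ∀ w : ℂ, ‖w‖ ≤ 1/2 →
    ‖1 + j * w - ((1 - w) ^ j)⁻¹‖ ≤ C * (‖w‖) ^ 2 := by
  induction j with
  | zero => exact ⟨0, le_refl 0, fun w _ => by simp⟩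
  | succ j ih =>
    obtain ⟨C, hC0, hC⟩ := ih
    refine ⟨2 * (C + j + 1), by positivity, fun w hw => ?_⟩
    have h1 : (1:ℝ)/2 ≤ ‖1 - w‖ := by
      have := norm_sub_norm_le (1:ℂ) w
      simp only [norm_one] at this
      linarith
    have h2 : (1 - w) ≠ 0 := by
      intro h
      rw [h, norm_zero] at h1; linarith
    have h3 : ((1 - w) ^ j) ≠ 0 := pow_ne_zero _ h2
    have key : (1 : ℂ) + (j+1 : ℕ) * w - ((1 - w) ^ (j+1))⁻¹
        = ((1 + j * w - ((1 - w) ^ j)⁻¹) - (j+1) * w ^ 2) * (1 - w)⁻¹ := by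
      push_cast
      field_simp
      ring
    rw [key, norm_mul, norm_inv]
    have h4 : (‖1 - w‖)⁻¹ ≤ 2 := by
      rw [← one_div]
      rw [div_le_iff₀ (by linarith : (0:ℝ) < ‖1 - w‖)]
      linarith
    have h5 : ‖(1 + j * w - ((1 - w) ^ j)⁻¹) - (j+1) * w ^ 2‖
        ≤ (C + j + 1) * (‖w‖) ^ 2 := by
      calc ‖(1 + j * w - ((1 - w) ^ j)⁻¹) - (j+1) * w ^ 2‖
          ≤ ‖1 + j * w - ((1 - w) ^ j)⁻¹‖ + ‖(j+1 : ℂ) * w ^ 2‖ :=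
            norm_sub_le _ _
        _ ≤ C * (‖w‖) ^ 2 + (j+1) * (‖w‖) ^ 2 := by
            gcongr
            · exact hC w hw
            · rw [norm_mul, norm_pow]
              have : ‖(j:ℂ)+1‖ = (j:ℝ)+1 := by
                norm_cast
              simp [this]
        _ = (C + j + 1) * (‖w‖) ^ 2 := by ring
    calc ‖(1 + j * w - ((1 - w) ^ j)⁻¹) - (j+1) * w ^ 2‖ * (‖1 - w‖)⁻¹
        ≤ ((C + j + 1) * (‖w‖) ^ 2) * 2 :=
          mul_le_mul h5 h4 (by positivity) (by positivity)
      _ = 2 * (C + j + 1) * (‖w‖) ^ 2 := by ring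


/-- Local expansion of `g` at `z = −1`:
`g(z) = (1 − λ^k η₀/s^{k+1/2})(z+1)^{1/2} − (λ^k η₁/s^{k+1/2})(z+1)^{3/2} + O(|z+1|^{5/2})`. -/
theorem gFun_expansion_at_minus_one (k : ℕ) (hk : 1 ≤ k) (lam s : ℝ)
    (hlam : 0 < lam) (hs : 0 < s) (c : ℕ → ℝ) (hck : c k = 1)
    (hc : ∀ m, 1 ≤ m → m ≤ k - 1 →
      ∑ j ∈ Finset.range (m + 1), halfChoose (m - j) * c (k - j) = 0)
    (η0 η1 : ℝ)
    (hη0 : η0 = ∑ j ∈ Finset.Icc 1 k, (-1 : ℝ) ^ (k + j) * c j)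
    (hη1 : η1 = ∑ j ∈ Finset.Icc 1 k, (-1 : ℝ) ^ (k + j) * j * c j) :
    ∃ δ > (0 : ℝ), ∃ C > (0 : ℝ), ∀ z : ℂ,
      0 < ‖z + 1‖ → ‖z + 1‖ < δ →
      ¬(z.im = 0 ∧ z.re ≤ -1) →
      ‖gFun k lam s c z
          - (((1 - lam ^ k * η0 / s ^ ((k : ℝ) + 1 / 2) : ℝ)) : ℂ) * (z + 1) ^ ((1 : ℂ) / 2)
          + (((lam ^ k * η1 / s ^ ((k : ℝ) + 1 / 2) : ℝ)) : ℂ) * (z + 1) ^ ((3 : ℂ) / 2)‖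
        ≤ C * (‖z + 1‖) ^ ((5 : ℝ) / 2) := by
  subst hη0 hη1
  choose Cf hCf0 hCf using aux_bound
  set K : ℝ := ∑ j ∈ Finset.Icc 1 k,
      (lam ^ k / s ^ ((k : ℝ) + 1/2)) * |c j| * Cf j with hK_def
  have hK : 0 ≤ K :=
    Finset.sum_nonneg fun j _ =>
      mul_nonneg (mul_nonneg (by positivity) (abs_nonneg _)) (hCf0 j)
  refine ⟨1/2, by norm_num, K + 1, by linarith, fun z habs0 habsδ _ => ?_⟩
  have hw0 : z + 1 ≠ 0 := by
    intro h
    rw [h, norm_zero] at habs0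
    exact lt_irrefl _ habs0
  have h12 : ‖z + 1‖ ≤ 1/2 := le_of_lt habsδ
  -- the per-j rewriting of z^{-j}
  have hz : ∀ j : ℕ, z ^ (-(j:ℤ)) = (-1:ℂ)^j * ((1 - (z+1))^j)⁻¹ := by
    intro j
    rw [zpow_neg, zpow_natCast]
    have hbase : ((-1:ℂ) * (1 - (z+1))) = z := by ring
    conv_lhs => rw [← hbase]
    rw [mul_pow, mul_inv, ← inv_pow, inv_neg, inv_one]
  set X : ℂ := ((lam : ℝ) : ℂ) ^ k with hX_def
  set Y : ℂ := ((s ^ ((k : ℝ) + 1/2) : ℝ) : ℂ) with hY_def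
  set E : ℂ := ∑ j ∈ Finset.Icc 1 k,
      X / Y * (-1:ℂ)^(k+j) * ((c j : ℝ) : ℂ) * (1 + j * (z+1) - ((1 - (z+1))^j)⁻¹) with hE_def
  have h32 : (z + 1) ^ ((3:ℂ)/2) = (z + 1) * (z + 1) ^ ((1:ℂ)/2) := by
    rw [show (3:ℂ)/2 = 1 + 1/2 by norm_num, Complex.cpow_add _ _ hw0, Complex.cpow_one]
  have hbr : 1 + ((-1 : ℂ)) ^ (k + 1) * ((lam ^ k : ℝ) : ℂ) / ((s ^ ((k : ℝ) + 1 / 2) : ℝ) : ℂ) *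
        (∑ j ∈ Finset.Icc 1 k, ((c j : ℝ) : ℂ) * z ^ (-(j : ℤ)))
      - (((1 - lam ^ k * (∑ j ∈ Finset.Icc 1 k, (-1 : ℝ) ^ (k + j) * c j) / s ^ ((k : ℝ) + 1 / 2) : ℝ)) : ℂ)
      + (((lam ^ k * (∑ j ∈ Finset.Icc 1 k, (-1 : ℝ) ^ (k + j) * j * c j) / s ^ ((k : ℝ) + 1 / 2) : ℝ)) : ℂ) * (z + 1)
      = E := by
    push_cast
    have hmain : ∑ j ∈ Finset.Icc 1 k,
        ( (-1:ℂ)^(k+1) * X / Y * (((c j : ℝ) : ℂ) * z ^ (-(j:ℤ)))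
          + X * ((-1:ℂ)^(k+j) * ((c j : ℝ) : ℂ)) / Y
          + X * ((-1:ℂ)^(k+j) * (j:ℂ) * ((c j : ℝ) : ℂ)) / Y * (z+1)
          - X / Y * (-1:ℂ)^(k+j) * ((c j : ℝ) : ℂ) * (1 + j * (z+1) - ((1 - (z+1))^j)⁻¹) ) = 0 :=
      Finset.sum_eq_zero fun j _ => by rw [hz j]; ring
    rw [Finset.sum_sub_distrib, Finset.sum_add_distrib, Finset.sum_add_distrib,
      ← Finset.mul_sum, ← Finset.sum_mul, ← Finset.sum_div, ← Finset.mul_sum,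
      ← Finset.sum_div, ← Finset.mul_sum] at hmain
    rw [hE_def]
    linear_combination hmain
  have heq : gFun k lam s c z
      - (((1 - lam ^ k * (∑ j ∈ Finset.Icc 1 k, (-1 : ℝ) ^ (k + j) * c j) / s ^ ((k : ℝ) + 1 / 2) : ℝ)) : ℂ) * (z + 1) ^ ((1 : ℂ) / 2)
      + (((lam ^ k * (∑ j ∈ Finset.Icc 1 k, (-1 : ℝ) ^ (k + j) * j * c j) / s ^ ((k : ℝ) + 1 / 2) : ℝ)) : ℂ) * (z + 1) ^ ((3 : ℂ) / 2)
      = (z + 1) ^ ((1:ℂ)/2) * E := by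
    rw [gFun, h32]
    linear_combination (z + 1) ^ ((1:ℂ)/2) * hbr
  rw [heq, norm_mul]
  have habs : ‖(z + 1) ^ ((1:ℂ)/2)‖ = (‖z+1‖) ^ ((1:ℝ)/2) := by
    rw [show ((1:ℂ)/2) = (((1/2 : ℝ) : ℝ) : ℂ) by norm_num, Complex.norm_cpow_real]
  have hXY : ‖X / Y‖ = lam ^ k / s ^ ((k : ℝ) + 1/2) := by
    rw [norm_div, hX_def, hY_def, norm_pow, Complex.norm_real, Real.norm_eq_abs, Complex.norm_real, Real.norm_eq_abs,
      abs_of_pos hlam, abs_of_pos (Real.rpow_pos_of_pos hs _)]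
  have hE : ‖E‖ ≤ K * (‖z+1‖) ^ 2 := by
    rw [hE_def, hK_def]
    calc ‖∑ j ∈ Finset.Icc 1 k,
          X / Y * (-1:ℂ)^(k+j) * ((c j : ℝ) : ℂ) * (1 + j * (z+1) - ((1 - (z+1))^j)⁻¹)‖
        ≤ ∑ j ∈ Finset.Icc 1 k, ‖X / Y * (-1:ℂ)^(k+j) * ((c j : ℝ) : ℂ) * (1 + j * (z+1) - ((1 - (z+1))^j)⁻¹)‖ :=
          norm_sum_le _ _
      _ ≤ ∑ j ∈ Finset.Icc 1 k,
            (lam ^ k / s ^ ((k : ℝ) + 1/2)) * |c j| * Cf j * (‖z+1‖) ^ 2 := by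
          refine Finset.sum_le_sum fun j _ => ?_
          rw [norm_mul, norm_mul, norm_mul, norm_pow, norm_neg, norm_one, one_pow, mul_one,
            hXY, Complex.norm_real, Real.norm_eq_abs]
          have := hCf j (z+1) h12
          calc lam ^ k / s ^ ((k : ℝ) + 1/2) * |c j| *
                ‖1 + j * (z+1) - ((1 - (z+1))^j)⁻¹‖
              ≤ lam ^ k / s ^ ((k : ℝ) + 1/2) * |c j| * (Cf j * (‖z+1‖) ^ 2) := by
                apply mul_le_mul_of_nonneg_left this
                  (mul_nonneg (by positivity) (abs_nonneg _))
            _ = lam ^ k / s ^ ((k : ℝ) + 1/2) * |c j| * Cf j * (‖z+1‖) ^ 2 := by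
                ring
      _ = (∑ j ∈ Finset.Icc 1 k, (lam ^ k / s ^ ((k : ℝ) + 1/2)) * |c j| * Cf j) *
            (‖z+1‖) ^ 2 := by rw [← Finset.sum_mul]
  rw [habs]
  have hpos : 0 < ‖z+1‖ := habs0
  calc (‖z+1‖) ^ ((1:ℝ)/2) * ‖E‖
      ≤ (‖z+1‖) ^ ((1:ℝ)/2) * (K * (‖z+1‖) ^ 2) := by
        apply mul_le_mul_of_nonneg_left hE (by positivity)
    _ = K * ((‖z+1‖) ^ ((1:ℝ)/2) * (‖z+1‖) ^ ((2:ℕ):ℝ)) := by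
        rw [Real.rpow_natCast]; ring
    _ = K * (‖z+1‖) ^ ((5:ℝ)/2) := by
        rw [← Real.rpow_add hpos]; norm_num
    _ ≤ (K + 1) * (‖z+1‖) ^ ((5:ℝ)/2) := by
        apply mul_le_mul_of_nonneg_right (by linarith) (by positivity)
end

section
/- Let α be a real number and let 𝔮 : (0,∞) → ℝ be twice differentiable with 𝔮(τ)² ≠ 1 for all τ > 0, satisfying the second-order ODE τ(𝔮² − 1)(τ𝔮')' = 𝔮(τ𝔮')² + (1/4)(τ − α²)𝔮 + (1/4)τ𝔮³(𝔮² − 2) on (0,∞), where ' = d/dτ. Define 𝔭(τ) = 2τ𝔮'(τ)/(𝔮(τ)² − 1) and the Hamiltonian H(τ) = (𝔮(τ)² − 1)𝔭(τ)²/(4τ) − α²𝔮(τ)²/(4τ(𝔮(τ)² − 1)) − 𝔮(τ)²/4. Then for all τ > 0, d/dτ( −τ H(τ) ) = 𝔮(τ)²/4. -/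
/-- For the Tracy–Widom function `𝔮` of the Bessel-kernel gap probability,
the Painlevé III Hamiltonian `H` satisfies `d/dτ(−τH(τ)) = 𝔮(τ)²/4`. -/
theorem tracy_widom_hamiltonian_derivative (α : ℝ) (q : ℝ → ℝ)
    (hq : ∀ τ ∈ Set.Ioi (0 : ℝ), DifferentiableAt ℝ q τ)
    (hq' : ∀ τ ∈ Set.Ioi (0 : ℝ), DifferentiableAt ℝ (deriv q) τ)
    (hne : ∀ τ ∈ Set.Ioi (0 : ℝ), q τ ^ 2 ≠ 1)
    (hode : ∀ τ ∈ Set.Ioi (0 : ℝ),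
      τ * (q τ ^ 2 - 1) * deriv (fun t => t * deriv q t) τ =
        q τ * (τ * deriv q τ) ^ 2 + (1 / 4) * (τ - α ^ 2) * q τ
          + (1 / 4) * τ * q τ ^ 3 * (q τ ^ 2 - 2)) :
    ∀ τ ∈ Set.Ioi (0 : ℝ),
      deriv (fun t =>
        -(t * ((q t ^ 2 - 1) * (2 * t * deriv q t / (q t ^ 2 - 1)) ^ 2 / (4 * t)
          - α ^ 2 * q t ^ 2 / (4 * t * (q t ^ 2 - 1)) - q t ^ 2 / 4))) τ
        = q τ ^ 2 / 4 := by
  intro τ hτ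
  have ht : (0 : ℝ) < τ := hτ
  have h1 : HasDerivAt q (deriv q τ) τ := (hq τ hτ).hasDerivAt
  have h2 : HasDerivAt (deriv q) (deriv (deriv q) τ) τ := (hq' τ hτ).hasDerivAt
  have hne1 : q τ ^ 2 - 1 ≠ 0 := sub_ne_zero.mpr (hne τ hτ)
  set s := q τ with hs
  set s1 := deriv q τ with hs1
  set s2 := deriv (deriv q) τ with hs2
  -- rewrite deriv of t * deriv q t
  have hmul : HasDerivAt (fun t => t * deriv q t) (1 * s1 + τ * s2) τ :=
    (hasDerivAt_id τ).mul h2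
  have hE : τ * (s ^ 2 - 1) * (1 * s1 + τ * s2) =
      s * (τ * s1) ^ 2 + (1 / 4) * (τ - α ^ 2) * s
        + (1 / 4) * τ * s ^ 3 * (s ^ 2 - 2) := by
    rw [← hmul.deriv]; exact hode τ hτ
  -- eventual equality with a simplified function
  have hevpos : ∀ᶠ t in nhds τ, 0 < t := eventually_gt_nhds ht
  have hcont : ContinuousAt (fun t => q t ^ 2 - 1) τ :=
    ((hq τ hτ).continuousAt.pow 2).sub continuousAt_const
  have hevne : ∀ᶠ t in nhds τ, q t ^ 2 - 1 ≠ 0 := hcont.eventually_ne hne1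
  have heq : (fun t =>
        -(t * ((q t ^ 2 - 1) * (2 * t * deriv q t / (q t ^ 2 - 1)) ^ 2 / (4 * t)
          - α ^ 2 * q t ^ 2 / (4 * t * (q t ^ 2 - 1)) - q t ^ 2 / 4)))
      =ᶠ[nhds τ] (fun t =>
        -(t ^ 2 * deriv q t ^ 2) / (q t ^ 2 - 1)
          + α ^ 2 * q t ^ 2 / (4 * (q t ^ 2 - 1)) + t * q t ^ 2 / 4) := by
    filter_upwards [hevpos, hevne] with t htpos htne
    have htne0 : t ≠ 0 := ne_of_gt htpos
    field_simp
    ring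
  rw [heq.deriv_eq]
  -- derivative of the simplified function
  have hA : HasDerivAt (fun t => t ^ 2 * deriv q t ^ 2)
      ((2 * τ ^ 1) * s1 ^ 2 + τ ^ 2 * (2 * s1 ^ 1 * s2)) τ :=
    (hasDerivAt_pow 2 τ).mul (h2.pow 2)
  have hB : HasDerivAt (fun t => q t ^ 2 - 1) (2 * s ^ 1 * s1) τ :=
    (h1.pow 2).sub_const 1
  have hT1 : HasDerivAt (fun t => -(t ^ 2 * deriv q t ^ 2) / (q t ^ 2 - 1))
      ((-((2 * τ ^ 1) * s1 ^ 2 + τ ^ 2 * (2 * s1 ^ 1 * s2)) * (s ^ 2 - 1)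
        - -(τ ^ 2 * s1 ^ 2) * (2 * s ^ 1 * s1)) / (s ^ 2 - 1) ^ 2) τ :=
    hA.neg.div hB hne1
  have hB4 : HasDerivAt (fun t => 4 * (q t ^ 2 - 1)) (4 * (2 * s ^ 1 * s1)) τ :=
    hB.const_mul 4
  have hne4 : 4 * (s ^ 2 - 1) ≠ 0 := by positivity
  have hT2 : HasDerivAt (fun t => α ^ 2 * q t ^ 2 / (4 * (q t ^ 2 - 1)))
      ((α ^ 2 * (2 * s ^ 1 * s1) * (4 * (s ^ 2 - 1))
        - α ^ 2 * s ^ 2 * (4 * (2 * s ^ 1 * s1))) / (4 * (s ^ 2 - 1)) ^ 2) τ :=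
    ((h1.pow 2).const_mul (α ^ 2)).div hB4 hne4
  have hT3 : HasDerivAt (fun t => t * q t ^ 2 / 4)
      ((1 * s ^ 2 + τ * (2 * s ^ 1 * s1)) / 4) τ :=
    ((hasDerivAt_id τ).mul (h1.pow 2)).div_const 4
  have hG : HasDerivAt (fun t => -(t ^ 2 * deriv q t ^ 2) / (q t ^ 2 - 1) + α ^ 2 * q t ^ 2 / (4 * (q t ^ 2 - 1)) + t * q t ^ 2 / 4) _ τ := (hT1.add hT2).add hT3
  rw [hG.deriv]
  have h2s : (s ^ 2 - 1) ^ 2 ≠ 0 := pow_ne_zero 2 hne1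
  field_simp
  linear_combination (-8 * s1) * hE
end

section
/- Let I ⊆ ℝ be an open interval, k ≥ 1 an integer, a : I → ℂ differentiable, and A_1, …, A_{k+1} : I → M_2(ℂ) differentiable matrix functions with tr A_j(λ) = 0 for all λ ∈ I; set A_{k+2} ≡ 0. Put B_0(λ) = [[0, 1],[2a'(λ), 0]] and σ₋ = [[0,0],[1,0]], and suppose the zero-curvature relations A_j'(λ) + [A_j(λ), B_0(λ)] + [A_{j+1}(λ), σ₋] = 0 hold on I for j = 1, …, k+1, where [P,Q] = PQ − QP. Define b_j := (A_j)_{12} for 1 ≤ j ≤ k+1 and b_{k+2} ≡ 0. Then for each j = 1, …, k+1: (i) b_j' = −2(A_j)_{11} on I (in particular each b_j is twice differentiable); (ii) A_j = [[ −b_j'/2, b_j ],[ −b_j''/2 + 2a' b_j + b_{j+1}, b_j'/2 ]]; and (iii) (A_j)_{21}' − 4a'(A_j)_{11} + b_{j+1}' = 0 on I. -/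
open Matrix

/-- Zero-curvature relations for the Lax pair of the coupled Painlevé III
system determine the structure of the coefficient matrices `A_j`. -/
theorem lax_pair_zero_curvature_structure (I : Set ℝ) (hIopen : IsOpen I)
    (hIconn : I.OrdConnected) (k : ℕ) (hk : 1 ≤ k)
    (a : ℝ → ℂ) (ha : ∀ l ∈ I, DifferentiableAt ℝ a l)
    (A : ℕ → ℝ → Matrix (Fin 2) (Fin 2) ℂ)
    (hA : ∀ j, 1 ≤ j → j ≤ k + 1 → ∀ p q : Fin 2, ∀ l ∈ I,
      DifferentiableAt ℝ (fun t => A j t p q) l)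
    (htr : ∀ j, 1 ≤ j → j ≤ k + 1 → ∀ l ∈ I, Matrix.trace (A j l) = 0)
    (hAk2 : A (k + 2) = fun _ => 0)
    (hzc : ∀ j, 1 ≤ j → j ≤ k + 1 → ∀ l ∈ I,
      (Matrix.of fun p q : Fin 2 => deriv (fun t => A j t p q) l)
        + (A j l * !![0, 1; 2 * deriv a l, 0] - !![0, 1; 2 * deriv a l, 0] * A j l)
        + (A (j + 1) l * !![0, 0; 1, 0] - !![0, 0; 1, 0] * A (j + 1) l) = 0) :
    ∀ j, 1 ≤ j → j ≤ k + 1 → ∀ l ∈ I,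
      -- (i) b_j' = −2 (A_j)₁₁, and in particular b_j is twice differentiable
      (deriv (fun t => A j t 0 1) l = -2 * A j l 0 0 ∧
        DifferentiableAt ℝ (fun t => A j t 0 1) l ∧
        DifferentiableAt ℝ (deriv (fun t => A j t 0 1)) l) ∧
      -- (ii) the entries of A_j in terms of b_j, b_{j+1} and a'
      A j l = !![-(deriv (fun t => A j t 0 1) l) / 2, A j l 0 1;
          -(deriv (deriv (fun t => A j t 0 1)) l) / 2
            + 2 * deriv a l * A j l 0 1 + A (j + 1) l 0 1,
          deriv (fun t => A j t 0 1) l / 2] ∧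
      -- (iii) (A_j)₂₁' − 4a'(A_j)₁₁ + b_{j+1}' = 0
      deriv (fun t => A j t 1 0) l - 4 * deriv a l * A j l 0 0
        + deriv (fun t => A (j + 1) t 0 1) l = 0 := by
  -- trace in terms of entries
  have htr' : ∀ j, 1 ≤ j → j ≤ k + 1 → ∀ x ∈ I, A j x 0 0 + A j x 1 1 = 0 := by
    intro j hj1 hj2 x hx
    have := htr j hj1 hj2 x hx
    rwa [Matrix.trace_fin_two] at this
  -- the (0,1) entry of the zero-curvature relation plus the trace condition:
  -- b_j' = -2 (A_j)₀₀ everywhere on I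
  have hder : ∀ j, 1 ≤ j → j ≤ k + 1 → ∀ x ∈ I,
      deriv (fun t => A j t 0 1) x = -2 * A j x 0 0 := by
    intro j hj1 hj2 x hx
    have h := hzc j hj1 hj2 x hx
    rw [← Matrix.ext_iff] at h
    have h01 := h 0 1
    simp [Matrix.mul_apply, Matrix.vecMul, dotProduct, Fin.sum_univ_two] at h01
    have ht := htr' j hj1 hj2 x hx
    linear_combination h01 + ht
  -- (0,0) entry of the zero-curvature relation
  have h00 : ∀ j, 1 ≤ j → j ≤ k + 1 → ∀ x ∈ I,
      deriv (fun t => A j t 0 0) x + 2 * deriv a x * A j x 0 1 - A j x 1 0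
        + A (j + 1) x 0 1 = 0 := by
    intro j hj1 hj2 x hx
    have h := hzc j hj1 hj2 x hx
    rw [← Matrix.ext_iff] at h
    have h00 := h 0 0
    simp [Matrix.mul_apply, Matrix.vecMul, dotProduct, Fin.sum_univ_two] at h00
    linear_combination h00
  -- (1,0) entry of the zero-curvature relation
  have h10 : ∀ j, 1 ≤ j → j ≤ k + 1 → ∀ x ∈ I,
      deriv (fun t => A j t 1 0) x + 2 * deriv a x * (A j x 1 1 - A j x 0 0)
        + (A (j + 1) x 1 1 - A (j + 1) x 0 0) = 0 := by
    intro j hj1 hj2 x hx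
    have h := hzc j hj1 hj2 x hx
    rw [← Matrix.ext_iff] at h
    have h10 := h 1 0
    simp [Matrix.mul_apply, Matrix.vecMul, dotProduct, Fin.sum_univ_two] at h10
    linear_combination h10
  intro j hj1 hj2 l hl
  -- b_j' agrees with -2 (A_j)₀₀ on a neighborhood of l
  have heq : deriv (fun t => A j t 0 1) =ᶠ[nhds l] fun t => -2 * A j t 0 0 :=
    Filter.eventuallyEq_of_mem (hIopen.mem_nhds hl) (fun x hx => hder j hj1 hj2 x hx)
  have hd00 : DifferentiableAt ℝ (fun t => A j t 0 0) l := hA j hj1 hj2 0 0 l hl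
  have hdb : DifferentiableAt ℝ (fun t => A j t 0 1) l := hA j hj1 hj2 0 1 l hl
  have hdb' : DifferentiableAt ℝ (deriv (fun t => A j t 0 1)) l := by
    refine (Filter.EventuallyEq.differentiableAt_iff heq).mpr ?_
    exact hd00.const_mul (-2)
  -- the second derivative of b_j
  have hb'' : deriv (deriv (fun t => A j t 0 1)) l = -2 * deriv (fun t => A j t 0 0) l := by
    rw [heq.deriv_eq]
    simpa using deriv_const_mul (-2 : ℂ) hd00
  refine ⟨⟨hder j hj1 hj2 l hl, hdb, hdb'⟩, ?_, ?_⟩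
  · -- structure of A_j
    have ht := htr' j hj1 hj2 l hl
    have hb' := hder j hj1 hj2 l hl
    have h0 := h00 j hj1 hj2 l hl
    have e00 : A j l 0 0 = -(deriv (fun t => A j t 0 1) l) / 2 := by
      linear_combination hb' / 2
    have e11 : A j l 1 1 = deriv (fun t => A j t 0 1) l / 2 := by
      linear_combination ht - hb' / 2
    have e10 : A j l 1 0 = -(deriv (deriv (fun t => A j t 0 1)) l) / 2
        + 2 * deriv a l * A j l 0 1 + A (j + 1) l 0 1 := by
      linear_combination hb'' / 2 - h0
    nth_rewrite 1 [Matrix.eta_fin_two (A j l)]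
    rw [e00, e10, e11]
  · -- (iii)
    have h1 := h10 j hj1 hj2 l hl
    have ht := htr' j hj1 hj2 l hl
    rcases eq_or_lt_of_le hj2 with hje | hjlt
    · -- j = k+1, so A_{j+1} = 0
      have hz : A (j + 1) = fun _ => 0 := by rw [hje]; exact hAk2
      have hz01 : (fun t => A (j + 1) t 0 1) = fun _ => 0 := by
        funext t; rw [hz]; simp
      rw [hz01, deriv_const]
      have h11 : A (j + 1) l 1 1 = 0 := by rw [hz]; simp
      have h00' : A (j + 1) l 0 0 = 0 := by rw [hz]; simp
      rw [h11, h00'] at h1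
      linear_combination h1 - 2 * deriv a l * ht
    · -- j ≤ k, use the derived relation for j+1
      have hj2' : j + 1 ≤ k + 1 := by omega
      have hb1 := hder (j + 1) (by omega) hj2' l hl
      have ht1 := htr' (j + 1) (by omega) hj2' l hl
      rw [hb1]
      linear_combination h1 - 2 * deriv a l * ht - ht1
end
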